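/- arXiv:1605.00393 — 2 statements merged into one kernel-verified Lean document; each statement's English description precedes it below -/
import Mathlib

section
/- For every x ∈ ℂ, the sequences ψ^{+}(x) and ψ^{−}(x) both satisfy the three-term recurrence q^{−n+1} ψ_{n−1} + q^{−n} ψ_{n+1} = x ψ_n for all n ∈ ℤ, and their Wronskian satisfies q^{−n} (ψ_{n+1}^{+}(x) ψ_n^{−}(x) − ψ_n^{+}(x) ψ_{n+1}^{−}(x)) = 2 i q^{1/2} for every n ∈ ℤ; in particular ψ^{+}(x) and ψ^{−}(x) are linearly independent. -/
open Complex Filter Topology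

/-- Finite q-Pochhammer symbol `(a;q)_n`. -/
noncomputable def qp (q a : ℂ) (n : ℕ) : ℂ := ∏ k ∈ Finset.range n, (1 - a * q ^ k)

/-- Infinite q-Pochhammer symbol `(a;q)_∞`. -/
noncomputable def qpInf (q a : ℂ) : ℂ := ∏' k : ℕ, (1 - a * q ^ k)

/-- Real power of `q`, coerced to `ℂ`. -/
noncomputable def qr (q : ℝ) (r : ℝ) : ℂ := ((q ^ r : ℝ) : ℂ)

/-- The solutions ψ_n^{±}(x); `s = 1` gives `ψ⁺`, `s = -1` gives `ψ⁻`. -/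
noncomputable def psi (q : ℝ) (s x : ℂ) (n : ℤ) : ℂ :=
  (s * Complex.I) ^ n * qr q ((n : ℝ) / 2) *
    ∑' k : ℕ, (-1) ^ k * (q : ℂ) ^ (k * (k - 1) / 2) *
      (-s * Complex.I * x * qr q ((n : ℝ) + 1 / 2)) ^ k /
        (qp (q : ℂ) (q : ℂ) k * qp (q : ℂ) (-(q : ℂ)) k)

/-! ### Auxiliary definitions -/

noncomputable def cc (q : ℝ) (k : ℕ) : ℂ :=
  (-1) ^ k * (q : ℂ) ^ (k * (k - 1) / 2) / (qp (q : ℂ) (q : ℂ) k * qp (q : ℂ) (-(q : ℂ)) k)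

noncomputable def FF (q : ℝ) (z : ℂ) : ℂ := ∑' k : ℕ, cc q k * z ^ k

section basiclemmas
variable {q : ℝ}

lemma qr_add (hq0 : 0 < q) (a b : ℝ) : qr q (a + b) = qr q a * qr q b := by
  unfold qr; rw [Real.rpow_add hq0]; push_cast; ring

lemma qr_zero : qr q 0 = 1 := by simp [qr]

lemma qr_one : qr q 1 = (q : ℂ) := by simp [qr]

lemma qr_neg_one : qr q (-1) = (q : ℂ)⁻¹ := by
  unfold qr; rw [Real.rpow_neg_one]; push_cast; ring

lemma qr_intCast (m : ℤ) : qr q ((m : ℝ)) = (q : ℂ) ^ m := by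
  unfold qr; rw [Real.rpow_intCast]; push_cast; ring

lemma qr_ne_zero (hq0 : 0 < q) (r : ℝ) : qr q r ≠ 0 := by
  unfold qr
  exact_mod_cast Complex.ofReal_ne_zero.2 (ne_of_gt (Real.rpow_pos_of_pos hq0 r))

lemma qp_q_eq (k : ℕ) : qp (q : ℂ) (q : ℂ) k = ((∏ j ∈ Finset.range k, (1 - q * q ^ j) : ℝ) : ℂ) := by
  unfold qp; push_cast; ring

lemma qp_nq_eq (k : ℕ) : qp (q : ℂ) (-(q : ℂ)) k = ((∏ j ∈ Finset.range k, (1 + q * q ^ j) : ℝ) : ℂ) := by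
  unfold qp; push_cast; ring

lemma dp_pos (hq0 : 0 < q) (hq1 : q < 1) (k : ℕ) :
    0 < ∏ j ∈ Finset.range k, (1 - q * q ^ j) :=
  Finset.prod_pos fun j _ => by nlinarith [pow_pos hq0 j, pow_le_one₀ hq0.le hq1.le (n := j)]

lemma dn_pos (hq0 : 0 < q) (k : ℕ) : 0 < ∏ j ∈ Finset.range k, (1 + q * q ^ j) :=
  Finset.prod_pos fun j _ => by nlinarith [pow_pos hq0 j]

lemma qp_q_ne (hq0 : 0 < q) (hq1 : q < 1) (k : ℕ) : qp (q : ℂ) (q : ℂ) k ≠ 0 := by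
  rw [qp_q_eq]; exact_mod_cast ne_of_gt (dp_pos hq0 hq1 k)

lemma qp_nq_ne (hq0 : 0 < q) (k : ℕ) : qp (q : ℂ) (-(q : ℂ)) k ≠ 0 := by
  rw [qp_nq_eq]; exact_mod_cast ne_of_gt (dn_pos hq0 k)

lemma cc_zero : cc q 0 = 1 := by simp [cc, qp]

lemma cc_ne_zero (hq0 : 0 < q) (hq1 : q < 1) (k : ℕ) : cc q k ≠ 0 := by
  unfold cc
  apply div_ne_zero
  · exact mul_ne_zero (pow_ne_zero _ (by norm_num)) (pow_ne_zero _ (by exact_mod_cast ne_of_gt hq0))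
  · exact mul_ne_zero (qp_q_ne hq0 hq1 k) (qp_nq_ne hq0 k)

lemma exp_succ (k : ℕ) : (k + 1) * ((k + 1) - 1) / 2 = k * (k - 1) / 2 + k := by
  cases k with
  | zero => rfl
  | succ j =>
    have e1 : (j + 1 + 1) - 1 = j + 1 := rfl
    have e2 : (j + 1) - 1 = j := rfl
    rw [e1, e2]
    have h : (j + 1 + 1) * (j + 1) = (j + 1) * j + 2 * (j + 1) := by ring
    have he : (j + 1) * j % 2 = 0 :=
      Nat.even_iff.mp (by rw [Nat.mul_comm]; exact Nat.even_mul_succ_self j)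
    omega

lemma one_sub_pow_ne (hq0 : 0 < q) (hq1 : q < 1) (k : ℕ) : (1 : ℂ) - (q : ℂ) ^ (k + 1) ≠ 0 := by
  have hql : q ^ (k + 1) < 1 := pow_lt_one₀ hq0.le hq1 (Nat.succ_ne_zero k)
  have : (1 - (q : ℂ) ^ (k + 1)) = ((1 - q ^ (k + 1) : ℝ) : ℂ) := by push_cast; ring
  rw [this]
  exact_mod_cast ne_of_gt (by linarith : (0:ℝ) < 1 - q ^ (k + 1))

lemma one_add_pow_ne (hq0 : 0 < q) (k : ℕ) : (1 : ℂ) + (q : ℂ) ^ (k + 1) ≠ 0 := by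
  have hqp : 0 < q ^ (k + 1) := pow_pos hq0 (k + 1)
  have : (1 + (q : ℂ) ^ (k + 1)) = ((1 + q ^ (k + 1) : ℝ) : ℂ) := by push_cast; ring
  rw [this]
  exact_mod_cast ne_of_gt (by linarith : (0:ℝ) < 1 + q ^ (k + 1))

lemma cc_succ (hq0 : 0 < q) (hq1 : q < 1) (k : ℕ) :
    cc q (k + 1) = cc q k * (-(q : ℂ) ^ k) / ((1 - (q : ℂ) ^ (k + 1)) * (1 + (q : ℂ) ^ (k + 1))) := by
  have h1 : qp (q : ℂ) (q : ℂ) (k + 1) = qp (q : ℂ) (q : ℂ) k * (1 - (q : ℂ) ^ (k + 1)) := by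
    unfold qp; rw [Finset.prod_range_succ]; ring
  have h2 : qp (q : ℂ) (-(q : ℂ)) (k + 1) = qp (q : ℂ) (-(q : ℂ)) k * (1 + (q : ℂ) ^ (k + 1)) := by
    unfold qp; rw [Finset.prod_range_succ]; ring
  have h3 := one_sub_pow_ne hq0 hq1 k
  have h4 := one_add_pow_ne hq0 k
  unfold cc
  rw [h1, h2, exp_succ, pow_add, pow_succ (-1 : ℂ)]
  field_simp
  ring

/-! ### Summability -/

lemma summable_cc_norm (hq0 : 0 < q) (hq1 : q < 1) (r : ℝ) (hr : 0 < r) :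
    Summable (fun k : ℕ => ‖cc q k‖ * r ^ k) := by
  apply summable_of_ratio_test_tendsto_lt_one (l := 0) one_pos
  · exact Eventually.of_forall fun k =>
      mul_ne_zero (norm_ne_zero_iff.2 (cc_ne_zero hq0 hq1 k)) (ne_of_gt (pow_pos hr k))
  · have key : ∀ k : ℕ, ‖‖cc q (k+1)‖ * r ^ (k+1)‖ / ‖‖cc q k‖ * r ^ k‖
        = (q ^ k / ((1 - q ^ (k+1)) * (1 + q ^ (k+1)))) * r := by
      intro k
      have hd1 : (0:ℝ) < 1 - q ^ (k+1) := by
        have := pow_lt_one₀ (n := k+1) hq0.le hq1 (by omega); linarith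
      have hd2 : (0:ℝ) < 1 + q ^ (k+1) := by positivity
      have hnc : ‖cc q (k+1)‖ = ‖cc q k‖ * (q ^ k / ((1 - q ^ (k+1)) * (1 + q ^ (k+1)))) := by
        rw [cc_succ hq0 hq1 k]
        rw [norm_div, norm_mul, norm_mul]
        have e1 : ‖-(q:ℂ)^k‖ = q ^ k := by
          rw [norm_neg, norm_pow, Complex.norm_real, Real.norm_eq_abs, abs_of_pos hq0]
        have e2 : ‖(1 - (q:ℂ)^(k+1))‖ = 1 - q ^ (k+1) := by
          have : (1 - (q:ℂ)^(k+1)) = ((1 - q ^ (k+1) : ℝ) : ℂ) := by push_cast; ring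
          rw [this, Complex.norm_real, Real.norm_eq_abs, abs_of_pos hd1]
        have e3 : ‖(1 + (q:ℂ)^(k+1))‖ = 1 + q ^ (k+1) := by
          have : (1 + (q:ℂ)^(k+1)) = ((1 + q ^ (k+1) : ℝ) : ℂ) := by push_cast; ring
          rw [this, Complex.norm_real, Real.norm_eq_abs, abs_of_pos hd2]
        rw [e1, e2, e3]; ring
      rw [Real.norm_of_nonneg (by positivity : (0:ℝ) ≤ ‖cc q (k+1)‖ * r ^ (k+1)),
        Real.norm_of_nonneg (by positivity : (0:ℝ) ≤ ‖cc q k‖ * r ^ k), hnc]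
      have hc : 0 < ‖cc q k‖ := norm_pos_iff.2 (cc_ne_zero hq0 hq1 k)
      rw [show ‖cc q k‖ * (q ^ k / ((1 - q ^ (k+1)) * (1 + q ^ (k+1)))) * r ^ (k+1)
          = (q ^ k / ((1 - q ^ (k+1)) * (1 + q ^ (k+1))) * r) * (‖cc q k‖ * r ^ k) from by
            rw [pow_succ]; ring,
        mul_div_assoc, div_self (ne_of_gt (by positivity)), mul_one]
    rw [show (0:ℝ) = (0 / ((1-0)*(1+0))) * r by norm_num]
    simp_rw [key]
    apply Tendsto.mul_const
    apply Tendsto.div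
    · exact tendsto_pow_atTop_nhds_zero_of_lt_one hq0.le hq1
    · apply Tendsto.mul
      · apply Tendsto.const_sub
        exact (tendsto_pow_atTop_nhds_zero_of_lt_one hq0.le hq1).comp (tendsto_add_atTop_nat 1)
      · apply Tendsto.const_add
        exact (tendsto_pow_atTop_nhds_zero_of_lt_one hq0.le hq1).comp (tendsto_add_atTop_nat 1)
    · norm_num

lemma summable_cc (hq0 : 0 < q) (hq1 : q < 1) (z : ℂ) :
    Summable (fun k : ℕ => cc q k * z ^ k) := by
  apply Summable.of_norm
  apply Summable.of_nonneg_of_le (fun k => norm_nonneg _)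
    (fun k => ?_) (summable_cc_norm hq0 hq1 (‖z‖ + 1) (by positivity))
  rw [norm_mul, norm_pow]
  exact mul_le_mul_of_nonneg_left (pow_le_pow_left₀ (norm_nonneg z) (by linarith) k) (norm_nonneg _)

/-! ### The function FF -/

lemma FF_feq (hq0 : 0 < q) (hq1 : q < 1) (z : ℂ) :
    (q : ℂ) * FF q (z * (q : ℂ)) - (q : ℂ) * FF q (z * (q : ℂ)⁻¹) = z * FF q z := by
  have hqne : (q : ℂ) ≠ 0 := by exact_mod_cast ne_of_gt hq0
  have S1 := summable_cc hq0 hq1 (z * (q : ℂ))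
  have S2 := summable_cc hq0 hq1 (z * (q : ℂ)⁻¹)
  set A : ℕ → ℂ := fun k => (q : ℂ) * (cc q k * (z * (q : ℂ)) ^ k)
      - (q : ℂ) * (cc q k * (z * (q : ℂ)⁻¹) ^ k) with hA
  have hSA : Summable A := (S1.mul_left _).sub (S2.mul_left _)
  have hL : (q : ℂ) * FF q (z * (q : ℂ)) - (q : ℂ) * FF q (z * (q : ℂ)⁻¹) = ∑' k, A k := by
    unfold FF
    rw [← tsum_mul_left, ← tsum_mul_left, ← Summable.tsum_sub (S1.mul_left _) (S2.mul_left _)]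
  have hA0 : A 0 = 0 := by simp [hA]
  have hAsucc : ∀ k : ℕ, A (k + 1) = z * (cc q k * z ^ k) := by
    intro k
    have h3 := one_sub_pow_ne hq0 hq1 k
    have h4 := one_add_pow_ne hq0 k
    simp only [hA, cc_succ hq0 hq1 k]
    field_simp
    have e : (q:ℂ) * (q:ℂ)^k * (q:ℂ)⁻¹ * (q:ℂ)⁻¹^k = 1 := by
      rw [inv_pow, show (q:ℂ) * (q:ℂ)^k * (q:ℂ)⁻¹ * ((q:ℂ)^k)⁻¹
        = ((q:ℂ) * (q:ℂ)⁻¹) * ((q:ℂ)^k * ((q:ℂ)^k)⁻¹) by ring,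
        mul_inv_cancel₀ hqne, mul_inv_cancel₀ (pow_ne_zero k hqne), one_mul]
    linear_combination (cc q k * z * z ^ k) * e
  rw [hL, Summable.tsum_eq_zero_add hSA, hA0, zero_add]
  simp_rw [hAsucc]
  rw [tsum_mul_left]
  rfl

lemma FF_zero : FF q 0 = 1 := by
  unfold FF
  rw [tsum_eq_single 0 (fun k hk => by simp [zero_pow hk])]
  simp [cc_zero]

lemma FF_tendsto (hq0 : 0 < q) (hq1 : q < 1) {z : ℕ → ℂ}
    (hz : Tendsto z atTop (𝓝 0)) :
    Tendsto (fun N => FF q (z N)) atTop (𝓝 1) := by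
  have h := tendsto_tsum_of_dominated_convergence
    (f := fun (N : ℕ) (k : ℕ) => cc q k * (z N) ^ k)
    (g := fun k => cc q k * (0 : ℂ) ^ k)
    (bound := fun k => ‖cc q k‖ * 1 ^ k)
    (𝓕 := atTop)
    (summable_cc_norm hq0 hq1 1 one_pos)
    (fun k => by
      exact (continuous_const.mul (continuous_pow k)).continuousAt.tendsto.comp hz)
    ?_
  · have : (∑' k, cc q k * (0:ℂ) ^ k) = FF q 0 := rfl
    rw [this, FF_zero] at h
    exact h
  · have hev : ∀ᶠ N in atTop, ‖z N‖ ≤ 1 := by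
      have := hz.norm
      simp only [norm_zero] at this
      exact this.eventually_le_const one_pos
    filter_upwards [hev] with N hN k
    rw [norm_mul, norm_pow, one_pow]
    exact mul_le_mul_of_nonneg_left (pow_le_one₀ (norm_nonneg _) hN) (norm_nonneg _)

/-! ### psi via FF -/

lemma psi_eq (q : ℝ) (s x : ℂ) (n : ℤ) :
    psi q s x n = (s * Complex.I) ^ n * qr q ((n : ℝ) / 2) *
      FF q (-(s * Complex.I * x) * qr q ((n : ℝ) + 1 / 2)) := by
  unfold psi FF cc
  congr 1
  exact tsum_congr fun k => by ring

end basiclemmas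

section main
variable {q : ℝ}

lemma recurrence (hq0 : 0 < q) (hq1 : q < 1) (s x : ℂ) (hs : s = 1 ∨ s = -1) (n : ℤ) :
    (q : ℂ) ^ (-n + 1) * psi q s x (n - 1) + (q : ℂ) ^ (-n) * psi q s x (n + 1)
      = x * psi q s x n := by
  have hqne : (q : ℂ) ≠ 0 := by exact_mod_cast ne_of_gt hq0
  have hu : s * Complex.I ≠ 0 := by
    rcases hs with h | h <;> simp [h, Complex.I_ne_zero]
  have hss : s * s = 1 := by rcases hs with h | h <;> rw [h] <;> norm_num
  have huu : s * Complex.I * (s * Complex.I) = -1 := by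
    rw [show s * Complex.I * (s * Complex.I) = s * s * (Complex.I * Complex.I) by ring, hss,
      Complex.I_mul_I]; ring
  have huinv : (s * Complex.I)⁻¹ = -(s * Complex.I) := by
    apply inv_eq_of_mul_eq_one_right
    rw [mul_neg, huu]; ring
  -- arguments
  have hargp : -(s * Complex.I * x) * qr q (((n + 1 : ℤ) : ℝ) + 1 / 2)
      = (-(s * Complex.I * x) * qr q ((n : ℝ) + 1 / 2)) * (q : ℂ) := by
    rw [show (((n + 1 : ℤ)) : ℝ) + 1 / 2 = ((n : ℝ) + 1 / 2) + 1 by push_cast; ring,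
      qr_add hq0, qr_one]; ring
  have hargm : -(s * Complex.I * x) * qr q (((n - 1 : ℤ) : ℝ) + 1 / 2)
      = (-(s * Complex.I * x) * qr q ((n : ℝ) + 1 / 2)) * (q : ℂ)⁻¹ := by
    rw [show (((n - 1 : ℤ)) : ℝ) + 1 / 2 = ((n : ℝ) + 1 / 2) + (-1) by push_cast; ring,
      qr_add hq0, qr_neg_one]; ring
  have hhalfp : qr q (((n + 1 : ℤ) : ℝ) / 2) = qr q ((n : ℝ) / 2) * qr q (1 / 2) := by
    rw [show (((n + 1 : ℤ)) : ℝ) / 2 = (n : ℝ) / 2 + 1 / 2 by push_cast; ring, qr_add hq0]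
  have hhalfm : qr q (((n - 1 : ℤ) : ℝ) / 2) = qr q ((n : ℝ) / 2) * qr q (-(1 / 2 : ℝ)) := by
    rw [show (((n - 1 : ℤ)) : ℝ) / 2 = (n : ℝ) / 2 + (-(1 / 2 : ℝ)) by push_cast; ring, qr_add hq0]
  have hqE : (q : ℂ) * qr q (-(1 / 2 : ℝ)) = qr q (1 / 2) := by
    rw [← qr_one (q := q), ← qr_add hq0]; norm_num
  have hTCD : (q : ℂ) ^ (-n) * (qr q ((n : ℝ) + 1 / 2) * qr q (1 / 2)) = (q : ℂ) := by
    rw [← qr_intCast (q := q) (-n), ← qr_add hq0, ← qr_add hq0]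
    rw [show ((-n : ℤ) : ℝ) + ((n : ℝ) + 1 / 2 + 1 / 2) = 1 by push_cast; ring, qr_one]
  have feq := FF_feq hq0 hq1 (-(s * Complex.I * x) * qr q ((n : ℝ) + 1 / 2))
  rw [psi_eq q s x (n - 1), psi_eq q s x (n + 1), psi_eq q s x n,
    hargp, hargm, hhalfp, hhalfm,
    zpow_add_one₀ hu n, zpow_sub_one₀ hu n, huinv,
    show -n + 1 = -n + 1 from rfl, zpow_add_one₀ hqne (-n)]
  apply mul_left_cancel₀ hqne
  linear_combination
    (-(q:ℂ) * ((q:ℂ)^(-n)) * ((s*Complex.I)^n) * (s*Complex.I) * (qr q ((n:ℝ)/2))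
      * (FF q ((-(s * Complex.I * x) * qr q ((n : ℝ) + 1 / 2)) * (q:ℂ)⁻¹))) * hqE
    + (((q:ℂ)^(-n)) * ((s*Complex.I)^n) * (s*Complex.I) * (qr q ((n:ℝ)/2)) * (qr q (1/2))) * feq
    + (-(x * ((q:ℂ)^(-n)) * ((s*Complex.I)^n) * (qr q ((n:ℝ)/2)) * (qr q (1/2))
        * (qr q ((n:ℝ)+1/2)) * (FF q (-(s * Complex.I * x) * qr q ((n : ℝ) + 1 / 2))))) * huu
    + (x * ((s*Complex.I)^n) * (qr q ((n:ℝ)/2))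
        * (FF q (-(s * Complex.I * x) * qr q ((n : ℝ) + 1 / 2)))) * hTCD

end main
section wronskian
variable {q : ℝ}

noncomputable def zz (q : ℝ) (s x : ℂ) (m : ℤ) : ℂ :=
  -(s * Complex.I * x) * qr q ((m : ℝ) + 1 / 2)

lemma psi_eq' (q : ℝ) (s x : ℂ) (n : ℤ) :
    psi q s x n = (s * Complex.I) ^ n * qr q ((n : ℝ) / 2) * FF q (zz q s x n) :=
  psi_eq q s x n

noncomputable def Wr (q : ℝ) (x : ℂ) (n : ℤ) : ℂ :=
  (q : ℂ) ^ (-n) * (psi q 1 x (n + 1) * psi q (-1) x n - psi q 1 x n * psi q (-1) x (n + 1))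

lemma Wr_step (hq0 : 0 < q) (hq1 : q < 1) (x : ℂ) (n : ℤ) : Wr q x n = Wr q x (n - 1) := by
  have hqne : (q : ℂ) ≠ 0 := by exact_mod_cast ne_of_gt hq0
  have r1 := recurrence hq0 hq1 1 x (Or.inl rfl) n
  have r2 := recurrence hq0 hq1 (-1) x (Or.inr rfl) n
  unfold Wr
  rw [show n - 1 + 1 = n by ring, show -(n - 1) = -n + 1 by ring, zpow_add_one₀ hqne (-n)]
  rw [zpow_add_one₀ hqne (-n)] at r1 r2
  linear_combination (psi q (-1) x n) * r1 - (psi q 1 x n) * r2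

lemma Wr_const (hq0 : 0 < q) (hq1 : q < 1) (x : ℂ) (n : ℤ) : Wr q x n = Wr q x 0 := by
  induction n using Int.induction_on with
  | zero => rfl
  | succ k ih =>
    have h := Wr_step hq0 hq1 x ((k : ℤ) + 1)
    rw [show (k : ℤ) + 1 - 1 = k by ring] at h
    rw [h, ih]
  | pred k ih =>
    have h := Wr_step hq0 hq1 x (-(k : ℤ))
    rw [show (-(k : ℤ) - 1 : ℤ) = -(k : ℤ) - 1 from rfl] at h
    rw [← h, ih]

lemma Wr_eval (hq0 : 0 < q) (hq1 : q < 1) (x : ℂ) (n : ℤ) :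
    Wr q x n = Complex.I * qr q (1 / 2) *
      (FF q (zz q 1 x (n + 1)) * FF q (zz q (-1) x n)
        + FF q (zz q 1 x n) * FF q (zz q (-1) x (n + 1))) := by
  have hu1 : (1 : ℂ) * Complex.I ≠ 0 := by simp [Complex.I_ne_zero]
  have hu2 : (-1 : ℂ) * Complex.I ≠ 0 := by simp [Complex.I_ne_zero]
  have hhalf : qr q (((n + 1 : ℤ) : ℝ) / 2) = qr q ((n : ℝ) / 2) * qr q (1 / 2) := by
    rw [show (((n + 1 : ℤ)) : ℝ) / 2 = (n : ℝ) / 2 + 1 / 2 by push_cast; ring, qr_add hq0]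
  have hprod : ((1 : ℂ) * Complex.I) ^ n * ((-1 : ℂ) * Complex.I) ^ n = 1 := by
    rw [← mul_zpow, show ((1 : ℂ) * Complex.I) * ((-1 : ℂ) * Complex.I)
      = -(Complex.I * Complex.I) by ring, Complex.I_mul_I]
    norm_num
  have hTB : (q : ℂ) ^ (-n) * (qr q ((n : ℝ) / 2) * qr q ((n : ℝ) / 2)) = 1 := by
    rw [← qr_intCast (q := q) (-n), ← qr_add hq0, ← qr_add hq0,
      show ((-n : ℤ) : ℝ) + ((n : ℝ) / 2 + (n : ℝ) / 2) = 0 by push_cast; ring, qr_zero]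
  unfold Wr
  rw [psi_eq' q 1 x (n + 1), psi_eq' q (-1) x (n + 1), psi_eq' q 1 x n, psi_eq' q (-1) x n]
  simp only [hhalf]
  rw [zpow_add_one₀ hu1 n, zpow_add_one₀ hu2 n]
  linear_combination
    ((q:ℂ)^(-n) * (qr q ((n:ℝ)/2)) * (qr q ((n:ℝ)/2)) * (qr q (1/2)) * Complex.I *
      (FF q (zz q 1 x (n+1)) * FF q (zz q (-1) x n)
        + FF q (zz q 1 x n) * FF q (zz q (-1) x (n+1)))) * hprod
    + ((qr q (1/2)) * Complex.I *
      (FF q (zz q 1 x (n+1)) * FF q (zz q (-1) x n)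
        + FF q (zz q 1 x n) * FF q (zz q (-1) x (n+1)))) * hTB

lemma zz_tendsto (hq0 : 0 < q) (hq1 : q < 1) (s x : ℂ) :
    Tendsto (fun N : ℕ => zz q s x (N : ℤ)) atTop (𝓝 0) := by
  have heq : (fun N : ℕ => zz q s x (N : ℤ))
      = fun N : ℕ => (-(s * Complex.I * x) * qr q (1 / 2)) * ((q : ℂ)) ^ (N : ℕ) := by
    funext N
    unfold zz
    rw [show (((N : ℤ)) : ℝ) + 1 / 2 = ((N : ℤ) : ℝ) + 1 / 2 from rfl,
      show (((N : ℤ)) : ℝ) + 1 / 2 = (1 / 2 : ℝ) + ((N : ℤ) : ℝ) by ring,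
      qr_add hq0, qr_intCast, zpow_natCast]
    ring
  rw [heq]
  have hnorm : ‖(q : ℂ)‖ < 1 := by
    rw [Complex.norm_real, Real.norm_eq_abs, abs_of_pos hq0]; exact hq1
  simpa using (tendsto_pow_atTop_nhds_zero_of_norm_lt_one hnorm).const_mul
    (-(s * Complex.I * x) * qr q (1 / 2))

lemma zz_tendsto' (hq0 : 0 < q) (hq1 : q < 1) (s x : ℂ) :
    Tendsto (fun N : ℕ => zz q s x ((N : ℤ) + 1)) atTop (𝓝 0) := by
  have h := (zz_tendsto hq0 hq1 s x).comp (tendsto_add_atTop_nat 1)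
  refine h.congr fun N => ?_
  simp only [Function.comp]
  norm_num

lemma Wr_tendsto (hq0 : 0 < q) (hq1 : q < 1) (x : ℂ) :
    Tendsto (fun N : ℕ => Wr q x (N : ℤ)) atTop (𝓝 (2 * Complex.I * qr q (1 / 2))) := by
  have h1p := FF_tendsto hq0 hq1 (zz_tendsto' hq0 hq1 1 x)
  have h1 := FF_tendsto hq0 hq1 (zz_tendsto hq0 hq1 1 x)
  have h2p := FF_tendsto hq0 hq1 (zz_tendsto' hq0 hq1 (-1) x)
  have h2 := FF_tendsto hq0 hq1 (zz_tendsto hq0 hq1 (-1) x)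
  have heq : (fun N : ℕ => Wr q x (N : ℤ))
      = fun N : ℕ => Complex.I * qr q (1 / 2) *
        (FF q (zz q 1 x ((N : ℤ) + 1)) * FF q (zz q (-1) x (N : ℤ))
          + FF q (zz q 1 x (N : ℤ)) * FF q (zz q (-1) x ((N : ℤ) + 1))) :=
    funext fun N => Wr_eval hq0 hq1 x (N : ℤ)
  rw [heq]
  have := (((h1p.mul h2).add (h1.mul h2p)).const_mul (Complex.I * qr q (1 / 2)))
  convert this using 2
  ring

lemma Wr_value (hq0 : 0 < q) (hq1 : q < 1) (x : ℂ) (n : ℤ) :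
    Wr q x n = 2 * Complex.I * qr q (1 / 2) := by
  have hconst : (fun N : ℕ => Wr q x (N : ℤ)) = fun _ => Wr q x 0 :=
    funext fun N => Wr_const hq0 hq1 x (N : ℤ)
  have h0 : Wr q x 0 = 2 * Complex.I * qr q (1 / 2) :=
    tendsto_nhds_unique (by rw [hconst] at *; exact tendsto_const_nhds : Tendsto (fun N : ℕ => Wr q x (N : ℤ)) atTop (𝓝 (Wr q x 0)))
      (Wr_tendsto hq0 hq1 x)
  rw [Wr_const hq0 hq1 x n, h0]

end wronskian

theorem stmt_0 (q : ℝ) (hq0 : 0 < q) (hq1 : q < 1) (x : ℂ) :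
    (∀ s ∈ ({1, -1} : Set ℂ), ∀ n : ℤ,
      (q : ℂ) ^ (-n + 1) * psi q s x (n - 1) + (q : ℂ) ^ (-n) * psi q s x (n + 1)
        = x * psi q s x n) ∧
    (∀ n : ℤ,
      (q : ℂ) ^ (-n) *
        (psi q 1 x (n + 1) * psi q (-1) x n - psi q 1 x n * psi q (-1) x (n + 1))
          = 2 * Complex.I * qr q (1 / 2)) ∧
    (∀ a b : ℂ, (∀ n : ℤ, a * psi q 1 x n + b * psi q (-1) x n = 0) → a = 0 ∧ b = 0) := by
  refine ⟨fun s hs n => recurrence hq0 hq1 s x (by simpa using hs) n,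
    fun n => Wr_value hq0 hq1 x n, ?_⟩
  intro a b hab
  have W0 := Wr_value hq0 hq1 x 0
  unfold Wr at W0
  simp only [neg_zero, zpow_zero, one_mul, zero_add] at W0
  have h0 := hab 0
  have h1 := hab 1
  have hD : (2 : ℂ) * Complex.I * qr q (1 / 2) ≠ 0 :=
    mul_ne_zero (mul_ne_zero two_ne_zero Complex.I_ne_zero) (qr_ne_zero hq0 _)
  constructor
  · have ha : a * (2 * Complex.I * qr q (1 / 2)) = 0 := by
      linear_combination (psi q (-1) x 0) * h1 - (psi q (-1) x 1) * h0 - a * W0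
    exact (mul_eq_zero.mp ha).resolve_right hD
  · have hb : b * (2 * Complex.I * qr q (1 / 2)) = 0 := by
      linear_combination (psi q 1 x 1) * h0 - (psi q 1 x 0) * h1 - b * W0
    exact (mul_eq_zero.mp hb).resolve_right hD
end

section
/- For every α ∈ ℝ and every x ∈ [−2, 2], the only sequence v = {v_n}_{n∈ℤ} of complex numbers satisfying v_{n−1} + (α q^{−n} − x) v_n + v_{n+1} = 0 for all n ∈ ℤ and ∑_{n∈ℤ} |v_n|² < ∞ is the zero sequence. -/
open Complex Filter Topology

private lemma geom_partial_le {q : ℝ} (hq0 : 0 < q) (hq1 : q < 1) (n : ℕ) :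
    ∑ k ∈ Finset.range n, q ^ k ≤ 1 / (1 - q) := by
  have h1 : (0:ℝ) < 1 - q := by linarith
  have h2 : ∑ k ∈ Finset.range n, q ^ k = (1 - q ^ n) / (1 - q) := by
    rw [geom_sum_eq (by intro h; simp [h] at hq1) n, ← neg_div_neg_eq]; ring_nf
  rw [h2, div_le_div_iff₀ h1 h1]
  have : 0 ≤ q ^ n := pow_nonneg hq0.le n
  nlinarith

/-- A discrete Volterra-type bound: if `f m ≤ f (m+1) + C * q^(m+1)` and `f → 0`,
then `f m ≤ C/(1-q) * q^(m+1)`. -/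
private lemma volterra_bound {q : ℝ} (hq0 : 0 < q) (hq1 : q < 1) {C : ℝ} (hC : 0 ≤ C)
    (f : ℕ → ℝ) (hstep : ∀ m : ℕ, f m ≤ f (m + 1) + C * q ^ (m + 1))
    (htend : Tendsto f atTop (nhds 0)) :
    ∀ m : ℕ, f m ≤ C / (1 - q) * q ^ (m + 1) := by
  have h1q : (0:ℝ) < 1 - q := by linarith
  have key : ∀ m n : ℕ, f m ≤ f (m + n) + C * ∑ k ∈ Finset.range n, q ^ (m + 1 + k) := by
    intro m n
    induction n with
    | zero => simp
    | succ n ih =>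
      have h2 := hstep (m + n)
      rw [Finset.sum_range_succ]
      show f m ≤ f (m + n + 1) + C * (∑ k ∈ Finset.range n, q ^ (m + 1 + k) + q ^ (m + 1 + n))
      have hexp : C * (∑ k ∈ Finset.range n, q ^ (m + 1 + k) + q ^ (m + 1 + n))
          = C * ∑ k ∈ Finset.range n, q ^ (m + 1 + k) + C * q ^ (m + n + 1) := by
        have hpow : q ^ (m + 1 + n) = q ^ (m + n + 1) := by ring_nf
        rw [hpow]; ring
      linarith
  intro m
  have hsum_le : ∀ n : ℕ, C * ∑ k ∈ Finset.range n, q ^ (m + 1 + k) ≤ C / (1 - q) * q ^ (m+1) := by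
    intro n
    have h3 : ∑ k ∈ Finset.range n, q ^ (m + 1 + k) = q ^ (m+1) * ∑ k ∈ Finset.range n, q ^ k := by
      rw [Finset.mul_sum]; exact Finset.sum_congr rfl fun k _ => by rw [pow_add]
    rw [h3]
    have h4 := geom_partial_le hq0 hq1 n
    have h6 : 0 ≤ q ^ (m+1) := pow_nonneg hq0.le _
    calc C * (q ^ (m+1) * ∑ k ∈ Finset.range n, q ^ k)
        ≤ C * (q ^ (m+1) * (1 / (1-q))) := by
          apply mul_le_mul_of_nonneg_left (mul_le_mul_of_nonneg_left h4 h6) hC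
      _ = C / (1 - q) * q ^ (m+1) := by field_simp
  have h7 : Tendsto (fun n => f (m + n)) atTop (nhds 0) := by
    have := htend.comp (tendsto_add_atTop_nat m)
    simpa [Function.comp_def, add_comm] using this
  have hlim : Tendsto (fun n => f (m + n) + C / (1-q) * q ^ (m+1)) atTop
      (nhds (C / (1-q) * q ^ (m+1))) := by
    simpa using h7.add (tendsto_const_nhds : Tendsto (fun _ : ℕ => C / (1-q) * q ^ (m+1)) atTop _)
  refine ge_of_tendsto hlim (Filter.Eventually.of_forall fun n => ?_)
  linarith [key m n, hsum_le n]

/-- Key lemma: a solution of the perturbed free Jacobi recursion (spectral parameter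
`x ∈ [-2,2]`, exponentially small coupling) tending to `0` at infinity vanishes,
provided the total coupling is a contraction. -/
private lemma tail_zero (q x β : ℝ) (hq0 : 0 < q) (hq1 : q < 1) (hx : x ^ 2 ≤ 4)
    (hsmall : |β| * q / (1 - q) ^ 2 < 1) (u : ℕ → ℂ)
    (hrec : ∀ m : ℕ, u (m + 2) = ((x : ℂ) - (β : ℂ) * (q : ℂ) ^ (m + 1)) * u (m + 1) - u m)
    (hu : Tendsto (fun m => ‖u m‖) atTop (nhds 0)) :
    ∀ m, u m = 0 := by
  have h1q : (0:ℝ) < 1 - q := by linarith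
  set s : ℝ := Real.sqrt (4 - x^2) with hs
  set L : ℂ := ((x:ℂ) + s * I) / 2 with hL
  set M : ℂ := ((x:ℂ) - s * I) / 2 with hM
  have hsq : s ^ 2 = 4 - x^2 := Real.sq_sqrt (by linarith)
  have hsqC : ((s:ℂ)) ^ 2 = ((4:ℂ)) - (x:ℂ)^2 := by
    rw [← Complex.ofReal_pow, hsq]; push_cast; ring
  have hI : (I:ℂ)^2 = -1 := Complex.I_sq
  have hLM : L * M = 1 := by
    rw [hL, hM]
    linear_combination (1/4 : ℂ) * hsqC - ((s:ℂ)^2/4) * hI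
  have hLaddM : L + M = (x:ℂ) := by rw [hL, hM]; ring
  have hnormM : ‖M‖ = 1 := by
    have h : Complex.normSq M = 1 := by
      rw [hM]; simp [Complex.normSq_apply]; nlinarith [hsq]
    rw [Complex.norm_def, h, Real.sqrt_one]
  have hnormL : ‖L‖ = 1 := by
    have h : Complex.normSq L = 1 := by
      rw [hL]; simp [Complex.normSq_apply]; nlinarith [hsq]
    rw [Complex.norm_def, h, Real.sqrt_one]
  have hbdd : BddAbove (Set.range fun m => ‖u m‖) :=
    (hu.isBoundedUnder_le).bddAbove_range
  set T : ℝ := ⨆ m, ‖u m‖ with hT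
  have hle_T : ∀ m, ‖u m‖ ≤ T := fun m => le_ciSup hbdd m
  have hT0 : 0 ≤ T := le_trans (norm_nonneg _) (hle_T 0)
  set w : ℕ → ℂ := fun m => u (m + 1) - L * u m with hw
  have hw_step : ∀ m : ℕ, w (m + 1) = M * w m - (β : ℂ) * (q : ℂ) ^ (m + 1) * u (m + 1) := by
    intro m
    have h := hrec m
    simp only [hw]
    linear_combination h + (u m) * hLM + (u (m + 1)) * hLaddM
  have hw_tendsto : Tendsto (fun m => ‖w m‖) atTop (nhds 0) := by
    have h1 : Tendsto (fun m => ‖u (m+1)‖ + ‖L‖ * ‖u m‖) atTop (nhds 0) := by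
      have := (hu.comp (tendsto_add_atTop_nat 1)).add (hu.const_mul ‖L‖)
      simpa using this
    refine squeeze_zero (fun m => norm_nonneg _) (fun m => ?_) h1
    calc ‖w m‖ ≤ ‖u (m+1)‖ + ‖L * u m‖ := norm_sub_le _ _
      _ = ‖u (m+1)‖ + ‖L‖ * ‖u m‖ := by rw [norm_mul]
  have hcoef : ∀ m : ℕ, ‖(β : ℂ) * (q : ℂ) ^ (m + 1)‖ = |β| * q ^ (m + 1) := by
    intro m
    rw [norm_mul, norm_pow, Complex.norm_real, Complex.norm_real,
      Real.norm_eq_abs, Real.norm_eq_abs, abs_of_pos hq0]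
  have hw_norm : ∀ m : ℕ, ‖w m‖ ≤ ‖w (m + 1)‖ + (T * |β|) * q ^ (m + 1) := by
    intro m
    have h1 : M * w m = w (m + 1) + (β : ℂ) * (q : ℂ) ^ (m + 1) * u (m + 1) := by
      rw [hw_step m]; ring
    have h2 : ‖w m‖ = ‖M * w m‖ := by rw [norm_mul, hnormM, one_mul]
    rw [h2, h1]
    calc ‖w (m+1) + (β : ℂ) * (q : ℂ) ^ (m + 1) * u (m + 1)‖
        ≤ ‖w (m+1)‖ + ‖(β : ℂ) * (q : ℂ) ^ (m + 1) * u (m + 1)‖ := norm_add_le _ _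
      _ ≤ ‖w (m+1)‖ + (T * |β|) * q ^ (m + 1) := by
          rw [norm_mul, hcoef m]
          have := mul_le_mul_of_nonneg_left (hle_T (m+1))
            (mul_nonneg (abs_nonneg β) (pow_nonneg hq0.le (m+1)))
          nlinarith [abs_nonneg β, pow_nonneg hq0.le (m+1), hle_T (m+1), norm_nonneg (u (m+1))]
  have hw_bound : ∀ m : ℕ, ‖w m‖ ≤ (T * |β|) / (1 - q) * q ^ (m + 1) :=
    volterra_bound hq0 hq1 (mul_nonneg hT0 (abs_nonneg β)) _ hw_norm hw_tendsto
  have hu_norm : ∀ m : ℕ, ‖u m‖ ≤ ‖u (m + 1)‖ + (T * |β| / (1 - q)) * q ^ (m + 1) := by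
    intro m
    have h1 : L * u m = u (m + 1) - w m := by simp only [hw]; ring
    have h2 : ‖u m‖ = ‖L * u m‖ := by rw [norm_mul, hnormL, one_mul]
    rw [h2, h1]
    calc ‖u (m+1) - w m‖ ≤ ‖u (m+1)‖ + ‖w m‖ := norm_sub_le _ _
      _ ≤ ‖u (m+1)‖ + (T * |β| / (1 - q)) * q ^ (m + 1) := by linarith [hw_bound m]
  have hu_bound : ∀ m : ℕ, ‖u m‖ ≤ (T * |β| / (1 - q)) / (1 - q) * q ^ (m + 1) :=
    volterra_bound hq0 hq1 (by positivity) _ hu_norm hu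
  have hfinal : ∀ m : ℕ, ‖u m‖ ≤ (|β| * q / (1 - q) ^ 2) * T := by
    intro m
    have h1 : q ^ (m + 1) ≤ q := by
      calc q ^ (m + 1) ≤ q ^ 1 := pow_le_pow_of_le_one hq0.le hq1.le (by omega)
        _ = q := pow_one q
    have h2 : (0:ℝ) ≤ T * |β| / (1 - q) / (1 - q) := by positivity
    calc ‖u m‖ ≤ (T * |β| / (1 - q)) / (1 - q) * q ^ (m + 1) := hu_bound m
      _ ≤ (T * |β| / (1 - q)) / (1 - q) * q := by exact mul_le_mul_of_nonneg_left h1 h2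
      _ = (|β| * q / (1 - q) ^ 2) * T := by field_simp
  have hT_le : T ≤ (|β| * q / (1 - q) ^ 2) * T := ciSup_le hfinal
  have hTzero : T = 0 := by nlinarith [hT_le, hT0, hsmall]
  intro m
  have := hle_T m
  rw [hTzero] at this
  exact norm_le_zero_iff.mp this

theorem stmt_15 (q : ℝ) (hq0 : 0 < q) (hq1 : q < 1) (α : ℝ) (x : ℝ)
    (hx : x ∈ Set.Icc (-2 : ℝ) 2) (v : ℤ → ℂ)
    (hrec : ∀ n : ℤ, v (n - 1) + ((α : ℂ) * (q : ℂ) ^ (-n) - (x : ℂ)) * v n + v (n + 1) = 0)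
    (hsum : Summable (fun n : ℤ => ‖v n‖ ^ 2)) :
    ∀ n : ℤ, v n = 0 := by
  obtain ⟨hx1, hx2⟩ := hx
  have hx' : x ^ 2 ≤ 4 := by nlinarith
  have hv0 : Tendsto (fun n : ℤ => ‖v n‖) cofinite (nhds 0) := by
    have h := hsum.tendsto_cofinite_zero
    have h2 := h.sqrt
    have h3 : ∀ n : ℤ, Real.sqrt (‖v n‖ ^ 2) = ‖v n‖ := fun n => Real.sqrt_sq (norm_nonneg _)
    simpa [Real.sqrt_zero, h3] using h2
  have hgeo : Tendsto (fun m : ℕ => |α| * q ^ m * q / (1 - q) ^ 2) atTop (nhds 0) := by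
    have h0 := tendsto_pow_atTop_nhds_zero_of_lt_one hq0.le hq1
    have h1 := ((h0.const_mul |α|).mul_const q).div_const ((1 - q) ^ 2)
    simpa using h1
  obtain ⟨m₀, hm₀⟩ := (hgeo.eventually_lt_const (by norm_num : (0:ℝ) < 1)).exists
  set β : ℝ := α * q ^ m₀ with hβ
  have hsmall : |β| * q / (1 - q) ^ 2 < 1 := by
    have : |β| = |α| * q ^ m₀ := by
      rw [hβ, abs_mul, abs_of_pos (pow_pos hq0 m₀)]
    rw [this]; exact hm₀
  set u : ℕ → ℂ := fun m => v (-(m₀ : ℤ) - (m : ℤ)) with hu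
  have hrec' : ∀ m : ℕ, u (m + 2) = ((x : ℂ) - (β : ℂ) * (q : ℂ) ^ (m + 1)) * u (m + 1) - u m := by
    intro m
    have h := hrec (-(m₀ : ℤ) - ((m : ℤ) + 1))
    have e1 : (-(m₀:ℤ) - ((m:ℤ)+1)) - 1 = -(m₀:ℤ) - (((m+2 : ℕ)) : ℤ) := by push_cast; ring
    have e2 : (-(m₀:ℤ) - ((m:ℤ)+1)) + 1 = -(m₀:ℤ) - (((m : ℕ)) : ℤ) := by push_cast; ring
    have e3 : -(-(m₀:ℤ) - ((m:ℤ)+1)) = ((m₀ + m + 1 : ℕ) : ℤ) := by push_cast; ring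
    have e4 : (-(m₀:ℤ) - ((m:ℤ)+1)) = -(m₀:ℤ) - (((m+1 : ℕ)) : ℤ) := by push_cast; ring
    rw [e1, e3, zpow_natCast] at h
    rw [e2] at h
    rw [e4] at h
    have hβC : ((β : ℝ) : ℂ) * (q : ℂ) ^ (m + 1) = (α : ℂ) * (q : ℂ) ^ (m₀ + m + 1) := by
      rw [hβ]; push_cast; ring
    simp only [hu]
    rw [hβC]
    linear_combination h
  have hinj : Function.Injective (fun m : ℕ => -(m₀ : ℤ) - (m : ℤ)) := by
    intro a b hab
    simp only at hab; omega
  have htend : Tendsto (fun m : ℕ => -(m₀ : ℤ) - (m : ℤ)) atTop cofinite := by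
    rw [← Nat.cofinite_eq_atTop]; exact hinj.tendsto_cofinite
  have hu_tend : Tendsto (fun m => ‖u m‖) atTop (nhds 0) := hv0.comp htend
  have hzero : ∀ m : ℕ, u m = 0 := tail_zero q x β hq0 hq1 hx' hsmall u hrec' hu_tend
  have hstep : ∀ n : ℤ, v (n - 1) = 0 → v n = 0 → v (n + 1) = 0 := by
    intro n h1 h2
    have h := hrec n
    rw [h1, h2] at h
    simpa using h
  have hup : ∀ k : ℕ, v (-(m₀ : ℤ) + k) = 0 ∧ v (-(m₀ : ℤ) + k - 1) = 0 := by
    intro k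
    induction k with
    | zero =>
      constructor
      · have := hzero 0; simpa [hu] using this
      · have := hzero 1
        simp only [hu] at this
        have e : -(m₀:ℤ) + (0:ℕ) - 1 = -(m₀:ℤ) - ((1:ℕ):ℤ) := by push_cast; ring
        rw [e]; exact this
    | succ k ih =>
      have h3 := hstep (-(m₀ : ℤ) + k) ih.2 ih.1
      constructor
      · have e : -(m₀:ℤ) + ((k+1 : ℕ) : ℤ) = -(m₀:ℤ) + k + 1 := by push_cast; ring
        rw [e]; exact h3
      · have e : -(m₀:ℤ) + ((k+1 : ℕ) : ℤ) - 1 = -(m₀:ℤ) + k := by push_cast; ring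
        rw [e]; exact ih.1
  intro n
  rcases le_or_gt (-(m₀ : ℤ)) n with h | h
  · have e : n = -(m₀ : ℤ) + ((n + m₀).toNat : ℤ) := by
      rw [Int.toNat_of_nonneg (by omega)]; ring
    rw [e]; exact (hup _).1
  · have e : n = -(m₀ : ℤ) - (((-(m₀:ℤ) - n).toNat : ℕ) : ℤ) := by
      rw [Int.toNat_of_nonneg (by omega)]; ring
    rw [e]
    exact hzero _
end
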